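/- Let v₁^L, v₂^R ∈ [1-δ, 1], v₁'(L), v₂'(R) ∈ [-δ, δ], and ε > 0. Set k₁ = (v₂^R - v₁^L)/ε, B = (v₁^L + v₂^R)/2 - |k₁|·ε/2, and C = V_ε/√B - λ*·B, where 0 < V_ε < λ*. Then for δ > 0 sufficiently small one has B ≥ 1 - 3δ/2 > 0 and C < 0, and there exists k₂ with max{0, (v₁'(L)-k₁)/ε, (k₁-v₂'(R))/ε} ≤ k₂ ≤ -C/2, so that the quadratic w(θ) = k₀ + k₁(θ-R₀) - k₂(θ-R₀)² with k₀ = (v₁^L+v₂^R)/2 + k₂ε²/4 satisfies the four matching conditions w(R₀-ε/2)=v₁^L, w(R₀+ε/2)=v₂^R, w'(R₀-ε/2) ≥ v₁'(L), w'(R₀+ε/2) ≤ v₂'(R), and the subsolution inequality 2k₂ + V_ε/√B - λ*·B ≤ 0. -/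

import Mathlib

open Real Set

private lemma deriv_quad (k₀ k₁ k₂ R₀ θ : ℝ) :
    deriv (fun θ => k₀ + k₁*(θ - R₀) - k₂*(θ - R₀)^2) θ = k₁ - 2*k₂*(θ - R₀) := by
  have h1 : HasDerivAt (fun θ : ℝ => θ - R₀) 1 θ := (hasDerivAt_id θ).sub_const R₀
  have h : HasDerivAt (fun θ => k₀ + k₁*(θ - R₀) - k₂*(θ - R₀)^2)
      (k₁ - 2*k₂*(θ - R₀)) θ := by
    have : HasDerivAt (fun θ => k₀ + k₁*(θ - R₀) - k₂*(θ - R₀)^2)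
        (k₁ * 1 - k₂ * (((2:ℕ):ℝ) * (θ - R₀) ^ 1 * 1)) θ := ((h1.const_mul k₁).const_add k₀).sub ((h1.pow 2).const_mul k₂)
    convert this using 1
    ring
  exact h.deriv

set_option maxHeartbeats 1600000 in
theorem stmt_16 (ε Vε lamstar R₀ : ℝ) (hε : 0 < ε) (hV : 0 < Vε) (hVl : Vε < lamstar) :
    ∃ δ₀ > (0:ℝ), ∀ δ : ℝ, 0 < δ → δ < δ₀ →
      ∀ v1L v2R d1 d2 : ℝ,
        v1L ∈ Icc (1-δ) 1 → v2R ∈ Icc (1-δ) 1 →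
        d1 ∈ Icc (-δ) δ → d2 ∈ Icc (-δ) δ →
        let k₁ := (v2R - v1L)/ε
        let B := (v1L + v2R)/2 - |k₁| * ε/2
        let C := Vε / Real.sqrt B - lamstar * B
        1 - 3*δ/2 ≤ B ∧ 0 < B ∧ C < 0 ∧
        ∃ k₂ : ℝ,
          max 0 (max ((d1 - k₁)/ε) ((k₁ - d2)/ε)) ≤ k₂ ∧ k₂ ≤ -C/2 ∧
          (let k₀ := (v1L + v2R)/2 + k₂*ε^2/4
           let w : ℝ → ℝ := fun θ => k₀ + k₁*(θ - R₀) - k₂*(θ - R₀)^2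
           w (R₀ - ε/2) = v1L ∧ w (R₀ + ε/2) = v2R ∧
           d1 ≤ deriv w (R₀ - ε/2) ∧ deriv w (R₀ + ε/2) ≤ d2 ∧
           2*k₂ + Vε / Real.sqrt B - lamstar * B ≤ 0) := by
  have hl : 0 < lamstar := hV.trans hVl
  set m : ℝ := (lamstar - Vε)/2 with hm
  have hmpos : 0 < m := by simp only [hm]; linarith
  refine ⟨min (1/3) (min (m/(3*lamstar)) (m*ε^2/(2*(ε+1)))), ?_, ?_⟩
  · have h1 : (0:ℝ) < m/(3*lamstar) := by positivity
    have h2 : (0:ℝ) < m*ε^2/(2*(ε+1)) := by positivity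
    simp only [gt_iff_lt, lt_min_iff]
    exact ⟨by norm_num, h1, h2⟩
  intro δ hδpos hδlt v1L v2R d1 d2 hv1 hv2 hd1 hd2
  intro k₁ B C
  have hk1def : k₁ = (v2R - v1L)/ε := rfl
  have hBdef : B = (v1L + v2R)/2 - |k₁| * ε/2 := rfl
  have hCdef : C = Vε / Real.sqrt B - lamstar * B := rfl
  clear_value k₁ B C
  obtain ⟨hv1l, hv1u⟩ := hv1
  obtain ⟨hv2l, hv2u⟩ := hv2
  obtain ⟨hd1l, hd1u⟩ := hd1
  obtain ⟨hd2l, hd2u⟩ := hd2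
  have hδ13 : δ < 1/3 := lt_of_lt_of_le hδlt (min_le_left _ _)
  have hδm : δ ≤ m/(3*lamstar) :=
    le_of_lt (lt_of_lt_of_le hδlt ((min_le_right _ _).trans (min_le_left _ _)))
  have hδe : δ * (2*(ε+1)) ≤ m*ε^2 := by
    have h := lt_of_lt_of_le hδlt ((min_le_right _ _).trans (min_le_right _ _))
    rw [lt_div_iff₀ (by positivity)] at h
    linarith
  have hδm' : 3*lamstar*δ ≤ m := by
    rw [div_div] at hδm
    rw [le_div_iff₀ (by positivity)] at hδm
    linarith [hδm]
  -- facts about k₁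
  have hk1e : k₁ * ε = v2R - v1L := by
    rw [hk1def]; field_simp
  have habs : |v2R - v1L| ≤ δ := by
    rw [abs_le]; constructor <;> linarith
  have hk1abs : |k₁| * ε ≤ δ := by
    rw [← abs_of_pos hε, ← abs_mul, hk1e]; exact habs
  have hk1eps : 0 ≤ |k₁| * ε := by positivity
  -- bounds on B
  have hBlow : 1 - 3*δ/2 ≤ B := by rw [hBdef]; linarith
  have hBhigh : B ≤ 1 := by rw [hBdef]; linarith
  have hBpos : 0 < B := by linarith
  have hsq : Real.sqrt B * Real.sqrt B = B := Real.mul_self_sqrt hBpos.le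
  have hspos : 0 < Real.sqrt B := Real.sqrt_pos.mpr hBpos
  have hs1 : Real.sqrt B ≤ 1 := Real.sqrt_le_one.mpr hBhigh
  have hBs : B ≤ Real.sqrt B := by nlinarith
  have hdivle : Vε / Real.sqrt B ≤ Vε / B :=
    div_le_div_of_nonneg_left hV.le hBpos hBs
  -- C ≤ -m
  have hCm : C ≤ -m := by
    have key : Vε / B ≤ lamstar * B - m := by
      rw [div_le_iff₀ hBpos]
      have hsq' : (1 - 3*δ/2)*(1 - 3*δ/2) ≤ B*B :=
        mul_le_mul hBlow hBlow (by linarith) hBpos.le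
      nlinarith [sq_nonneg δ, mul_nonneg hl.le (sq_nonneg δ), hδm', hmpos, hBhigh, hl]
    rw [hCdef]
    linarith
  have hChalf : m/2 ≤ -C/2 := by linarith
  -- bounds on the max
  have hmax1 : (d1 - k₁)/ε ≤ m/2 := by
    rw [div_le_iff₀ hε]
    have h1 : -δ ≤ v2R - v1L := (abs_le.mp habs).1
    have h2 : d1*ε ≤ δ*ε := mul_le_mul_of_nonneg_right hd1u hε.le
    have h4 : (d1 - k₁) * ε ≤ (m/2 * ε) * ε := by
      have h3 : (d1 - k₁) * ε = d1*ε - k₁*ε := by ring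
      rw [h3, hk1e]
      nlinarith [h2, h1, hδe]
    exact le_of_mul_le_mul_right h4 hε
  have hmax2 : (k₁ - d2)/ε ≤ m/2 := by
    rw [div_le_iff₀ hε]
    have h1 : v2R - v1L ≤ δ := (abs_le.mp habs).2
    have h2 : -δ*ε ≤ d2*ε := mul_le_mul_of_nonneg_right hd2l hε.le
    have h4 : (k₁ - d2) * ε ≤ (m/2 * ε) * ε := by
      have h3 : (k₁ - d2) * ε = k₁*ε - d2*ε := by ring
      rw [h3, hk1e]
      nlinarith [h2, h1, hδe]
    exact le_of_mul_le_mul_right h4 hε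
  refine ⟨hBlow, hBpos, by linarith [hCm, hmpos], ?_⟩
  set k₂ := max 0 (max ((d1 - k₁)/ε) ((k₁ - d2)/ε)) with hk2
  have hk2le : k₂ ≤ -C/2 := by
    apply max_le (by linarith)
    exact max_le (hmax1.trans hChalf) (hmax2.trans hChalf)
  refine ⟨k₂, le_refl _, hk2le, ?_⟩
  intro k₀ w
  have hk0def : k₀ = (v1L + v2R)/2 + k₂*ε^2/4 := rfl
  have hwdef : w = fun θ => k₀ + k₁*(θ - R₀) - k₂*(θ - R₀)^2 := rfl
  clear_value k₀ w
  have hd1k : (d1 - k₁)/ε ≤ k₂ := le_max_of_le_right (le_max_left _ _)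
  have hd2k : (k₁ - d2)/ε ≤ k₂ := le_max_of_le_right (le_max_right _ _)
  have hd1k' : d1 - k₁ ≤ k₂ * ε := by rwa [div_le_iff₀ hε] at hd1k
  have hd2k' : k₁ - d2 ≤ k₂ * ε := by rwa [div_le_iff₀ hε] at hd2k
  have hhalf : k₁ * (ε/2) = (v2R - v1L)/2 := by
    have := hk1e; linarith [hk1e]
  refine ⟨?_, ?_, ?_, ?_, ?_⟩
  · rw [hwdef]
    simp only
    rw [hk0def, show (R₀ - ε/2) - R₀ = -(ε/2) by ring]
    have : k₁ * -(ε/2) = -((v2R - v1L)/2) := by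
      rw [mul_neg, hhalf]
    rw [this]; ring
  · rw [hwdef]
    simp only
    rw [hk0def, show (R₀ + ε/2) - R₀ = ε/2 by ring]
    rw [hhalf]; ring
  · rw [hwdef, deriv_quad]
    have h : k₁ - 2*k₂*((R₀ - ε/2) - R₀) = k₁ + k₂*ε := by ring
    rw [h]; linarith
  · rw [hwdef, deriv_quad]
    have h : k₁ - 2*k₂*((R₀ + ε/2) - R₀) = k₁ - k₂*ε := by ring
    rw [h]; linarith
  · have h : Vε / Real.sqrt B - lamstar * B = C := hCdef.symm
    linarith [hk2le, h.ge, h.le]
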